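/- arXiv:1609.05505 — 4 statements merged into one kernel-verified Lean document; each statement's English description precedes it below -/
import Mathlib

section
/- Boundary value of A f(u) for the advection-reaction equation: Let f : ℝ → ℝ be differentiable at b ∈ ℝ, let a : ℝ → ℝ be differentiable at 0, and let u : ℝ → ℝ → ℝ. Assume that u s 0 = b for all s, that for each t the map x ↦ u t x is differentiable at 0, and that at the inflow boundary point the equation holds in the sense that s ↦ u s 0 has derivative d/dx[x ↦ a(x)·u(t,x)](0) + f(b) at s = t. Then d/dx[x ↦ a(x)·f(u(t,x))](0) = − f'(b)·f(b) + a'(0)·( f(b) − f'(b)·b ). -/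
/-- Boundary value of `A f(u)` for the advection-reaction equation
`∂ₜu = ∂ₓ(a u) + f(u)` with inflow boundary condition `u(t,0) = b`:
`A f(u)|₀ = −f'(b) f(b) + a'(0) (f(b) − f'(b) b)`. -/
theorem advection_reaction_boundary_Afu
    (f : ℝ → ℝ) (b : ℝ) (hf : DifferentiableAt ℝ f b)
    (a : ℝ → ℝ) (ha : DifferentiableAt ℝ a 0)
    (u : ℝ → ℝ → ℝ) (t : ℝ)
    (hb : ∀ s : ℝ, u s 0 = b)
    (hdiff : ∀ t' : ℝ, DifferentiableAt ℝ (u t') 0)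
    (heq : HasDerivAt (fun s : ℝ => u s 0)
      (deriv (fun x : ℝ => a x * u t x) 0 + f b) t) :
    deriv (fun x : ℝ => a x * f (u t x)) 0
      = - deriv f b * f b + deriv a 0 * (f b - deriv f b * b) := by
  have hu : DifferentiableAt ℝ (u t) 0 := hdiff t
  have hub : u t 0 = b := hb t
  -- the time derivative is zero since u s 0 = b is constant
  have hconst : HasDerivAt (fun s : ℝ => u s 0) 0 t := by
    have : (fun s : ℝ => u s 0) = fun _ => b := funext hb
    rw [this]; exact hasDerivAt_const t b
  have hzero : deriv (fun x : ℝ => a x * u t x) 0 + f b = 0 :=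
    heq.unique hconst
  -- compute deriv (a * u t) 0
  have hd1 : deriv (fun x : ℝ => a x * u t x) 0
      = deriv a 0 * b + a 0 * deriv (u t) 0 := by
    rw [deriv_fun_mul ha hu, hub]
  have hk : a 0 * deriv (u t) 0 = -f b - deriv a 0 * b := by
    rw [hd1] at hzero; linarith
  -- chain rule for f ∘ u t
  have hfu : HasDerivAt (fun x : ℝ => f (u t x)) (deriv f b * deriv (u t) 0) 0 := by
    have h1 : HasDerivAt f (deriv f b) (u t 0) := by rw [hub]; exact hf.hasDerivAt
    exact h1.comp 0 hu.hasDerivAt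
  have hafu : HasDerivAt (fun x : ℝ => a x * f (u t x))
      (deriv a 0 * f (u t 0) + a 0 * (deriv f b * deriv (u t) 0)) 0 :=
    ha.hasDerivAt.mul hfu
  rw [hafu.deriv, hub]
  have : a 0 * (deriv f b * deriv (u t) 0) = deriv f b * (-f b - deriv a 0 * b) := by
    rw [← hk]; ring
  rw [this]; ring
end

section
/- Boundary value of A f(u) for the diffusion-reaction equation: Let c ∈ ℝ, let f : ℝ → ℝ be twice continuously differentiable, b ∈ ℝ, and let u : ℝ → ℝ → ℝ be such that for each t the map x ↦ u t x is twice continuously differentiable. Assume that u s 0 = b for all s, and that at the boundary point the equation holds in the sense that s ↦ u s 0 has derivative c·(∂²ₓu)(t,0) + f(b) at s = t. Then c · d²/dx²[x ↦ f(u(t,x))](0) = c · f''(b) · ((∂ₓu)(t,0))² − f'(b)·f(b). -/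
/-- Boundary value of `A f(u)` for the diffusion-reaction equation
`∂ₜu = c ∂ₓₓ u + f(u)` with boundary condition `u(t,0) = b`:
`c (f∘u(t,·))''(0) = c f''(b) ((∂ₓu)(t,0))² − f'(b) f(b)`. -/
theorem diffusion_reaction_boundary_Afu
    (c : ℝ) (f : ℝ → ℝ) (hf : ContDiff ℝ 2 f) (b : ℝ)
    (u : ℝ → ℝ → ℝ) (t : ℝ)
    (hu : ∀ t' : ℝ, ContDiff ℝ 2 (u t'))
    (hb : ∀ s : ℝ, u s 0 = b)
    (heq : HasDerivAt (fun s : ℝ => u s 0)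
      (c * iteratedDeriv 2 (u t) 0 + f b) t) :
    c * iteratedDeriv 2 (fun x : ℝ => f (u t x)) 0
      = c * iteratedDeriv 2 f b * (deriv (u t) 0) ^ 2 - deriv f b * f b := by
  set g := u t with hg
  have cg : ContDiff ℝ 2 g := hu t
  -- boundary compatibility: c * g'' 0 = - f b
  have hconst : (fun s : ℝ => u s 0) = fun _ => b := funext hb
  have hzero : HasDerivAt (fun s : ℝ => u s 0) 0 t := by
    rw [hconst]; exact hasDerivAt_const t b
  have hcomp : c * iteratedDeriv 2 g 0 = - f b := by
    have := heq.unique hzero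
    linarith
  -- differentiability facts
  have hfd : Differentiable ℝ f := hf.differentiable (by norm_num)
  have hgd : Differentiable ℝ g := cg.differentiable (by norm_num)
  have hfd' : Differentiable ℝ (deriv f) :=
    (hf.iterate_deriv' 1 1).differentiable (by norm_num)
  have hgd' : Differentiable ℝ (deriv g) :=
    (cg.iterate_deriv' 1 1).differentiable (by norm_num)
  -- first derivative of f ∘ g
  have h1 : deriv (fun x : ℝ => f (g x)) = fun x => deriv f (g x) * deriv g x := by
    funext x
    exact (((hfd (g x)).hasDerivAt).comp x ((hgd x).hasDerivAt)).deriv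
  have hg0 : g 0 = b := hb t
  -- second derivative at 0
  have h2 : iteratedDeriv 2 (fun x : ℝ => f (g x)) 0
      = deriv (deriv f) b * (deriv g 0) ^ 2 + deriv f b * deriv (deriv g) 0 := by
    rw [iteratedDeriv_succ, iteratedDeriv_one, h1]
    have hA : HasDerivAt (fun x => deriv f (g x)) (deriv (deriv f) b * deriv g 0) 0 := by
      have := (((hfd' (g 0)).hasDerivAt).comp 0 ((hgd 0).hasDerivAt))
      rwa [hg0] at this
    have hB : HasDerivAt (deriv g) (deriv (deriv g) 0) 0 := (hgd' 0).hasDerivAt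
    have : deriv (fun x => deriv f (g x) * deriv g x) 0
        = deriv (deriv f) b * deriv g 0 * deriv g 0 + deriv f (g 0) * deriv (deriv g) 0 :=
      (hA.mul hB).deriv
    rw [this, hg0]
    ring
  have hit : iteratedDeriv 2 g 0 = deriv (deriv g) 0 := by
    rw [iteratedDeriv_succ, iteratedDeriv_one]
  rw [h2, iteratedDeriv_succ, iteratedDeriv_one]
  rw [hit] at hcomp
  linear_combination deriv f b * hcomp
end

section
/- Second-order accuracy of the TDBC boundary data: Let f : ℝ → ℝ be continuously differentiable, b ∈ ℝ, and u₀ : ℝ → ℝ with u₀(0) = b and u₀''(0) = −f(b). Let w : ℝ × ℝ → ℝ be four times continuously differentiable on [0,1] × [−1,1], with w(0,x) = u₀(x) and ∂ₜw(t,x) = f(w(t,x)) for all (t,x) ∈ [0,1] × [−1,1]. Then there exists C > 0 such that for all τ ∈ (0,1] and all s ∈ [0,τ]: | w(τ/2, 0) + s·(∂²ₓw)(τ/2, ·)(0) + (s²/2)·(∂⁴ₓw)(τ/2, ·)(0) − ( b + (τ/2 − s)·f(b) ) | ≤ C·τ². -/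
open Set

private lemma tdbc_uniqueDiffOn :
    UniqueDiffOn ℝ (Icc (0:ℝ) 1 ×ˢ Icc (-1:ℝ) 1) :=
  (uniqueDiffOn_Icc (by norm_num)).prod (uniqueDiffOn_Icc (by norm_num))

private lemma tdbc_hasDerivX {F : ℝ × ℝ → ℝ}
    (hF : DifferentiableOn ℝ F (Icc (0:ℝ) 1 ×ˢ Icc (-1:ℝ) 1))
    {t x : ℝ} (ht : t ∈ Icc (0:ℝ) 1) (hx : x ∈ Icc (-1:ℝ) 1) :
    HasDerivWithinAt (fun y : ℝ => F (t, y))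
      (fderivWithin ℝ F (Icc (0:ℝ) 1 ×ˢ Icc (-1:ℝ) 1) (t, x) (0, 1))
      (Icc (-1:ℝ) 1) x := by
  have hmem : (t, x) ∈ Icc (0:ℝ) 1 ×ˢ Icc (-1:ℝ) 1 := ⟨ht, hx⟩
  have hdF := (hF _ hmem).hasFDerivWithinAt
  have hι : HasDerivWithinAt (fun y : ℝ => ((t:ℝ), y)) ((0:ℝ), (1:ℝ)) (Icc (-1:ℝ) 1) x :=
    (HasDerivAt.prodMk (hasDerivAt_const x t) (hasDerivAt_id x)).hasDerivWithinAt
  exact hdF.comp_hasDerivWithinAt x hι (fun y hy => ⟨ht, hy⟩)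

private lemma tdbc_hasDerivT {F : ℝ × ℝ → ℝ}
    (hF : DifferentiableOn ℝ F (Icc (0:ℝ) 1 ×ˢ Icc (-1:ℝ) 1))
    {t x : ℝ} (ht : t ∈ Icc (0:ℝ) 1) (hx : x ∈ Icc (-1:ℝ) 1) :
    HasDerivWithinAt (fun s : ℝ => F (s, x))
      (fderivWithin ℝ F (Icc (0:ℝ) 1 ×ˢ Icc (-1:ℝ) 1) (t, x) (1, 0))
      (Icc (0:ℝ) 1) t := by
  have hmem : (t, x) ∈ Icc (0:ℝ) 1 ×ˢ Icc (-1:ℝ) 1 := ⟨ht, hx⟩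
  have hdF := (hF _ hmem).hasFDerivWithinAt
  have hι : HasDerivWithinAt (fun s : ℝ => (s, (x:ℝ))) ((1:ℝ), (0:ℝ)) (Icc (0:ℝ) 1) t :=
    (HasDerivAt.prodMk (hasDerivAt_id t) (hasDerivAt_const t x)).hasDerivWithinAt
  exact hdF.comp_hasDerivWithinAt t hι (fun s hs => by exact ⟨hs, hx⟩)

private lemma tdbc_step {m n : WithTop ℕ∞} {F : ℝ × ℝ → ℝ}
    (hF : ContDiffOn ℝ n F (Icc (0:ℝ) 1 ×ˢ Icc (-1:ℝ) 1)) (hmn : m + 1 ≤ n) :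
    ContDiffOn ℝ m (fun p => fderivWithin ℝ F (Icc (0:ℝ) 1 ×ˢ Icc (-1:ℝ) 1) p (0, 1))
      (Icc (0:ℝ) 1 ×ˢ Icc (-1:ℝ) 1) := by
  have h1 := hF.fderivWithin tdbc_uniqueDiffOn hmn
  exact (ContinuousLinearMap.apply ℝ ℝ ((0:ℝ), (1:ℝ))).contDiff.comp_contDiffOn h1

private lemma tdbc_ideriv_eq (n : ℕ) (g : ℝ → ℝ) :
    iteratedDerivWithin n g (Icc (-1:ℝ) 1) 0 = iteratedDeriv n g 0 := by
  rw [← iteratedDerivWithin_univ]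
  simp only [iteratedDerivWithin_eq_iteratedFDerivWithin]
  rw [iteratedFDerivWithin_congr_set (Filter.eventuallyEq_univ.2
    (Icc_mem_nhds (by norm_num) (by norm_num)))]

/-- the iterated `(0,1)`-directional within-derivatives of `w`. -/
private noncomputable def tdbcG (w : ℝ × ℝ → ℝ) : ℕ → (ℝ × ℝ → ℝ)
  | 0 => w
  | (k+1) => fun p => fderivWithin ℝ (tdbcG w k) (Icc (0:ℝ) 1 ×ˢ Icc (-1:ℝ) 1) p (0, 1)

private lemma tdbcG_contDiffOn {w : ℝ × ℝ → ℝ}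
    (hw : ContDiffOn ℝ 4 w (Icc (0:ℝ) 1 ×ˢ Icc (-1:ℝ) 1)) :
    ∀ k : ℕ, k ≤ 4 → ContDiffOn ℝ ((4 - k : ℕ) : WithTop ℕ∞) (tdbcG w k)
      (Icc (0:ℝ) 1 ×ˢ Icc (-1:ℝ) 1) := by
  intro k
  induction k with
  | zero => intro _; exact_mod_cast hw
  | succ k IH =>
    intro hk
    have hk' : k ≤ 4 := by omega
    have harith : ((4 - (k+1) : ℕ) : WithTop ℕ∞) + 1 = ((4 - k : ℕ) : WithTop ℕ∞) := by
      have h : (4 - (k+1)) + 1 = 4 - k := by omega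
      exact_mod_cast congrArg (fun j : ℕ => (j : WithTop ℕ∞)) h
    exact tdbc_step (IH hk') harith.le

private lemma tdbcG_diffOn {w : ℝ × ℝ → ℝ}
    (hw : ContDiffOn ℝ 4 w (Icc (0:ℝ) 1 ×ˢ Icc (-1:ℝ) 1)) {k : ℕ} (hk : k ≤ 3) :
    DifferentiableOn ℝ (tdbcG w k) (Icc (0:ℝ) 1 ×ˢ Icc (-1:ℝ) 1) := by
  refine (tdbcG_contDiffOn hw k (by omega)).differentiableOn ?_
  have : (4 - k : ℕ) ≠ 0 := by omega
  exact_mod_cast this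

private lemma tdbcG_slice {w : ℝ × ℝ → ℝ}
    (hw : ContDiffOn ℝ 4 w (Icc (0:ℝ) 1 ×ˢ Icc (-1:ℝ) 1)) (k : ℕ) :
    k ≤ 4 → ∀ t ∈ Icc (0:ℝ) 1, ∀ x ∈ Icc (-1:ℝ) 1,
      iteratedDerivWithin k (fun y : ℝ => w (t, y)) (Icc (-1:ℝ) 1) x = tdbcG w k (t, x) := by
  induction k with
  | zero => intro _ t ht x hx; simp [tdbcG, iteratedDerivWithin_zero]
  | succ k IH =>
    intro hk t ht x hx
    have hk' : k ≤ 4 := by omega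
    have hud : UniqueDiffWithinAt ℝ (Icc (-1:ℝ) 1) x :=
      (uniqueDiffOn_Icc (by norm_num : (-1:ℝ) < 1)) x hx
    rw [iteratedDerivWithin_succ]
    have hcongr : derivWithin (iteratedDerivWithin k (fun y : ℝ => w (t, y)) (Icc (-1:ℝ) 1))
        (Icc (-1:ℝ) 1) x
        = derivWithin (fun y : ℝ => tdbcG w k (t, y)) (Icc (-1:ℝ) 1) x := by
      apply derivWithin_congr
      · intro y hy; exact IH hk' t ht y hy
      · exact IH hk' t ht x hx
    rw [hcongr]
    have := (tdbc_hasDerivX (tdbcG_diffOn hw (show k ≤ 3 by omega)) ht hx).derivWithin hud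
    rw [this]
    rfl

/-- Second-order accuracy of the TDBC boundary data: the Taylor-expansion boundary
values `V(s)|₀ = w(τ/2,0) + s ∂ₓₓw(τ/2,·)(0) + (s²/2) ∂ₓ⁴w(τ/2,·)(0)` agree with the
simplified data `V̄(s) = b + (τ/2 − s) f(b)` up to `O(τ²)`, uniformly for `0 ≤ s ≤ τ`. -/
theorem tdbc_boundary_data_order2
    (f : ℝ → ℝ) (hf : ContDiff ℝ 1 f) (b : ℝ) (u₀ : ℝ → ℝ)
    (hu₀0 : u₀ 0 = b) (hu₀2 : iteratedDeriv 2 u₀ 0 = -f b)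
    (w : ℝ × ℝ → ℝ)
    (hw : ContDiffOn ℝ 4 w (Set.Icc (0 : ℝ) 1 ×ˢ Set.Icc (-1 : ℝ) 1))
    (hw0 : ∀ x ∈ Set.Icc (-1 : ℝ) 1, w (0, x) = u₀ x)
    (hwt : ∀ p ∈ Set.Icc (0 : ℝ) 1 ×ˢ Set.Icc (-1 : ℝ) 1,
      HasDerivAt (fun s : ℝ => w (s, p.2)) (f (w p)) p.1) :
    ∃ C : ℝ, 0 < C ∧ ∀ τ ∈ Set.Ioc (0 : ℝ) 1, ∀ s ∈ Set.Icc (0 : ℝ) τ,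
      |w (τ / 2, 0) + s * iteratedDeriv 2 (fun x : ℝ => w (τ / 2, x)) 0
          + (s ^ 2 / 2) * iteratedDeriv 4 (fun x : ℝ => w (τ / 2, x)) 0
          - (b + (τ / 2 - s) * f b)| ≤ C * τ ^ 2 := by
  have hx0 : (0:ℝ) ∈ Icc (-1:ℝ) 1 := by norm_num
  have ht0 : (0:ℝ) ∈ Icc (0:ℝ) 1 := by norm_num
  have hcomp : IsCompact (Icc (0:ℝ) 1 ×ˢ Icc (-1:ℝ) 1) := isCompact_Icc.prod isCompact_Icc
  -- global bounds
  obtain ⟨R, hR⟩ := hcomp.exists_bound_of_continuousOn hw.continuousOn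
  obtain ⟨M, hM⟩ := (isCompact_Icc (a := -R) (b := R)).exists_bound_of_continuousOn
    hf.continuous.continuousOn
  obtain ⟨L, hL⟩ := (isCompact_Icc (a := -R) (b := R)).exists_bound_of_continuousOn
    (hf.continuous_deriv le_rfl).continuousOn
  have hG2 : ContDiffOn ℝ 2 (tdbcG w 2) (Icc (0:ℝ) 1 ×ˢ Icc (-1:ℝ) 1) := by
    have h := tdbcG_contDiffOn hw 2 (by norm_num)
    exact_mod_cast h
  obtain ⟨K, hK⟩ := hcomp.exists_bound_of_continuousOn
    (hG2.continuousOn_fderivWithin tdbc_uniqueDiffOn (by norm_num))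
  obtain ⟨C4, hC4⟩ := hcomp.exists_bound_of_continuousOn
    (tdbcG_contDiffOn hw 4 le_rfl).continuousOn
  -- the boundary trace g
  set g : ℝ → ℝ := fun t => w (t, 0) with hgdef
  have hg : ∀ t ∈ Icc (0:ℝ) 1, HasDerivAt g (f (g t)) t := by
    intro t ht
    exact hwt (t, 0) ⟨ht, hx0⟩
  have hgb : g 0 = b := by show w (0, 0) = b; rw [hw0 0 hx0, hu₀0]
  have hgR : ∀ t ∈ Icc (0:ℝ) 1, g t ∈ Icc (-R) R := by
    intro t ht
    have := hR (t, 0) ⟨ht, hx0⟩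
    rw [Real.norm_eq_abs] at this
    exact abs_le.1 this
  have hbR : b ∈ Icc (-R) R := hgb ▸ hgR 0 ht0
  -- nonnegativity of the constants
  have hM0 : 0 ≤ M := le_trans (norm_nonneg _) (hM b hbR)
  have hL0 : 0 ≤ L := le_trans (norm_nonneg _) (hL b hbR)
  have hK0 : 0 ≤ K := le_trans (norm_nonneg _) (hK (0,0) ⟨ht0, hx0⟩)
  have hC40 : 0 ≤ C4 := le_trans (norm_nonneg _) (hC4 (0,0) ⟨ht0, hx0⟩)
  -- Lipschitz bound for f on [-R, R]
  have hfLip : ∀ a ∈ Icc (-R) R, ∀ c ∈ Icc (-R) R, ‖f a - f c‖ ≤ L * ‖a - c‖ := by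
    intro a ha c hc
    exact (convex_Icc (-R) R).norm_image_sub_le_of_norm_hasDerivWithin_le
      (fun y _ => ((hf.differentiable one_ne_zero) y).hasDerivAt.hasDerivWithinAt)
      (fun y hy => hL y hy) hc ha
  -- value of G2 at t = 0
  have hG2zero : tdbcG w 2 (0, 0) = -f b := by
    have h1 := (tdbcG_slice hw 2 (by norm_num) 0 ht0 0 hx0).symm
    have h2 : iteratedDerivWithin 2 (fun y : ℝ => w (0, y)) (Icc (-1:ℝ) 1) 0
        = iteratedDerivWithin 2 u₀ (Icc (-1:ℝ) 1) 0 :=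
      iteratedDerivWithin_congr (fun y hy => hw0 y hy) hx0
    rw [h1, h2, tdbc_ideriv_eq, hu₀2]
  -- norm of (1,0)
  have hnorm10 : ‖((1:ℝ), (0:ℝ))‖ = 1 := by
    rw [Prod.norm_def]; simp
  -- Lipschitz bound for t ↦ G2 (t, 0)
  have hG2lip : ∀ t ∈ Icc (0:ℝ) 1, ‖tdbcG w 2 (t, 0) - tdbcG w 2 (0, 0)‖ ≤ K * t := by
    intro t ht
    have h := (convex_Icc (0:ℝ) 1).norm_image_sub_le_of_norm_hasDerivWithin_le
      (f' := fun t => fderivWithin ℝ (tdbcG w 2) (Icc (0:ℝ) 1 ×ˢ Icc (-1:ℝ) 1) (t, 0) (1, 0))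
      (fun t ht => tdbc_hasDerivT (hG2.differentiableOn (by norm_num)) ht hx0)
      (fun t ht => by
        calc ‖fderivWithin ℝ (tdbcG w 2) (Icc (0:ℝ) 1 ×ˢ Icc (-1:ℝ) 1) (t, 0) (1, 0)‖
            ≤ ‖fderivWithin ℝ (tdbcG w 2) (Icc (0:ℝ) 1 ×ˢ Icc (-1:ℝ) 1) (t, 0)‖ * ‖((1:ℝ),(0:ℝ))‖ :=
              ContinuousLinearMap.le_opNorm _ _
          _ ≤ K := by rw [hnorm10, mul_one]; exact hK (t, 0) ⟨ht, hx0⟩) ht0 ht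
    calc ‖tdbcG w 2 (t, 0) - tdbcG w 2 (0, 0)‖ ≤ K * ‖t - 0‖ := h
      _ = K * t := by rw [sub_zero, Real.norm_eq_abs, abs_of_nonneg ht.1]
  refine ⟨L * M / 4 + K / 2 + C4 / 2 + 1, by positivity, ?_⟩
  intro τ hτ s hs
  have hτ0 : 0 < τ := hτ.1
  have hτ1 : τ ≤ 1 := hτ.2
  have hτ2mem : τ / 2 ∈ Icc (0:ℝ) 1 := ⟨by linarith, by linarith⟩
  have hsub : Icc (0:ℝ) (τ/2) ⊆ Icc (0:ℝ) 1 := Icc_subset_Icc le_rfl (by linarith)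
  -- step 1 : |w(τ/2,0) - b - (τ/2) f b| ≤ L*M*(τ/2)²
  have hgLip : ∀ t ∈ Icc (0:ℝ) (τ/2), ‖g t - b‖ ≤ M * (τ/2) := by
    intro t ht
    have h := (convex_Icc (0:ℝ) (τ/2)).norm_image_sub_le_of_norm_hasDerivWithin_le
      (f' := fun t => f (g t))
      (fun t' ht' => (hg t' (hsub ht')).hasDerivWithinAt)
      (fun t' ht' => hM _ (hgR t' (hsub ht')))
      (left_mem_Icc.2 (by linarith)) ht
    rw [hgb] at h
    calc ‖g t - b‖ ≤ M * ‖t - 0‖ := h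
      _ ≤ M * (τ/2) := by
          rw [sub_zero, Real.norm_eq_abs, abs_of_nonneg ht.1]
          exact mul_le_mul_of_nonneg_left ht.2 hM0
  have hstep1 : ‖g (τ/2) - (b + (τ/2) * f b)‖ ≤ (L * (M * (τ/2))) * (τ/2) := by
    have h := (convex_Icc (0:ℝ) (τ/2)).norm_image_sub_le_of_norm_hasDerivWithin_le
      (f := fun t => g t - (b + t * f b))
      (f' := fun t => f (g t) - f b)
      (fun t ht => (((hg t (hsub ht)).sub
        ((hasDerivAt_mul_const (f b)).const_add b))).hasDerivWithinAt)
      (fun t ht => by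
        calc ‖f (g t) - f b‖ ≤ L * ‖g t - b‖ := hfLip _ (hgR t (hsub ht)) _ hbR
          _ ≤ L * (M * (τ/2)) := mul_le_mul_of_nonneg_left (hgLip t ht) hL0)
      (left_mem_Icc.2 (by linarith))
      (right_mem_Icc.2 (by linarith))
    have e1 : (fun t => g t - (b + t * f b)) (τ/2) - (fun t => g t - (b + t * f b)) 0
        = g (τ/2) - (b + (τ/2) * f b) := by
      show g (τ/2) - (b + (τ/2) * f b) - (g 0 - (b + 0 * f b)) = _
      rw [hgb]; ring
    have e2 : ‖(τ/2 : ℝ) - 0‖ = τ/2 := by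
      rw [sub_zero, Real.norm_eq_abs, abs_of_nonneg (by linarith : (0:ℝ) ≤ τ/2)]
    rw [e1, e2] at h
    exact h
  -- step 2 : identify the iterated derivatives with G2, G4
  have hD2 : iteratedDeriv 2 (fun x : ℝ => w (τ / 2, x)) 0 = tdbcG w 2 (τ/2, 0) := by
    rw [← tdbc_ideriv_eq]
    exact tdbcG_slice hw 2 (by norm_num) (τ/2) hτ2mem 0 hx0
  have hD4 : iteratedDeriv 4 (fun x : ℝ => w (τ / 2, x)) 0 = tdbcG w 4 (τ/2, 0) := by
    rw [← tdbc_ideriv_eq]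
    exact tdbcG_slice hw 4 le_rfl (τ/2) hτ2mem 0 hx0
  have hstep2 : ‖tdbcG w 2 (τ/2, 0) + f b‖ ≤ K * (τ/2) := by
    have := hG2lip (τ/2) hτ2mem
    rw [hG2zero] at this
    simpa [sub_neg_eq_add] using this
  have hstep3 : ‖tdbcG w 4 (τ/2, 0)‖ ≤ C4 := hC4 (τ/2, 0) ⟨hτ2mem, hx0⟩
  -- combine
  rw [hD2, hD4]
  have hexp : w (τ / 2, 0) + s * tdbcG w 2 (τ/2, 0) + s ^ 2 / 2 * tdbcG w 4 (τ/2, 0)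
      - (b + (τ / 2 - s) * f b)
      = (g (τ/2) - (b + (τ/2) * f b)) + s * (tdbcG w 2 (τ/2, 0) + f b)
        + (s^2/2) * tdbcG w 4 (τ/2, 0) := by
    simp only [hgdef]; ring
  rw [hexp]
  have hs0 : 0 ≤ s := hs.1
  have hsτ : s ≤ τ := hs.2
  have habs : |(g (τ/2) - (b + (τ/2) * f b)) + s * (tdbcG w 2 (τ/2, 0) + f b)
      + (s^2/2) * tdbcG w 4 (τ/2, 0)|
      ≤ ‖g (τ/2) - (b + (τ/2) * f b)‖ + s * ‖tdbcG w 2 (τ/2, 0) + f b‖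
        + (s^2/2) * ‖tdbcG w 4 (τ/2, 0)‖ := by
    simp only [Real.norm_eq_abs]
    calc |(g (τ/2) - (b + (τ/2) * f b)) + s * (tdbcG w 2 (τ/2, 0) + f b)
        + (s^2/2) * tdbcG w 4 (τ/2, 0)|
        ≤ |(g (τ/2) - (b + (τ/2) * f b)) + s * (tdbcG w 2 (τ/2, 0) + f b)|
          + |(s^2/2) * tdbcG w 4 (τ/2, 0)| := abs_add_le _ _
      _ ≤ |g (τ/2) - (b + (τ/2) * f b)| + |s * (tdbcG w 2 (τ/2, 0) + f b)|
          + |(s^2/2) * tdbcG w 4 (τ/2, 0)| := by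
            have := abs_add_le (g (τ/2) - (b + (τ/2) * f b)) (s * (tdbcG w 2 (τ/2, 0) + f b))
            linarith
      _ = |g (τ/2) - (b + (τ/2) * f b)| + s * |tdbcG w 2 (τ/2, 0) + f b|
          + (s^2/2) * |tdbcG w 4 (τ/2, 0)| := by
            rw [abs_mul, abs_mul, abs_of_nonneg hs0, abs_of_nonneg (by positivity : (0:ℝ) ≤ s^2/2)]
  refine le_trans habs ?_
  have h2 : s * ‖tdbcG w 2 (τ/2, 0) + f b‖ ≤ τ * (K * (τ/2)) := by
    apply mul_le_mul hsτ hstep2 (norm_nonneg _) (le_of_lt hτ0)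
  have h3 : (s^2/2) * ‖tdbcG w 4 (τ/2, 0)‖ ≤ (τ^2/2) * C4 := by
    apply mul_le_mul _ hstep3 (norm_nonneg _) (by positivity)
    have : s^2 ≤ τ^2 := by nlinarith
    linarith
  nlinarith [sq_nonneg τ, hstep1, h2, h3]
end

section
/- Third-order accuracy of the TDBC boundary data: Let f : ℝ → ℝ be twice continuously differentiable, b ∈ ℝ, and u₀ : ℝ → ℝ with u₀(0) = b, u₀''(0) = −f(b), and u₀''''(0) = −d²/dx²[x ↦ f(u₀(x))](0). Let w : ℝ × ℝ → ℝ be six times continuously differentiable on [0,1] × [−1,1], with w(0,x) = u₀(x) and ∂ₜw(t,x) = f(w(t,x)) for all (t,x) ∈ [0,1] × [−1,1]. Write d := d²/dx²[x ↦ f(u₀(x))](0). Then there exists C > 0 such that for all τ ∈ (0,1] and all s ∈ [0,τ]: | w(τ/2, 0) + s·(∂²ₓw)(τ/2, ·)(0) + (s²/2)·(∂⁴ₓw)(τ/2, ·)(0) − ( b + (τ/2)·f(b) + (τ²/8)·f'(b)·f(b) − s·f(b) + (s(τ−s)/2)·d ) | ≤ C·τ³. -/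
open Set

namespace TDBC

def KK : Set (ℝ × ℝ) := Icc (0:ℝ) 1 ×ˢ Icc (-1:ℝ) 1

def exv : ℝ × ℝ := (0, 1)
def etv : ℝ × ℝ := (1, 0)

/-- `∂ₓ` within `KK`. -/
noncomputable def Dx (F : ℝ × ℝ → ℝ) : ℝ × ℝ → ℝ := fun p => fderivWithin ℝ F KK p exv

lemma KK_uniqueDiff : UniqueDiffOn ℝ KK :=
  (uniqueDiffOn_Icc zero_lt_one).prod (uniqueDiffOn_Icc (by norm_num))

lemma KK_compact : IsCompact KK := (isCompact_Icc).prod (isCompact_Icc)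

lemma KK_closure_interior : KK ⊆ closure (interior KK) := by
  have h : interior KK = Ioo (0:ℝ) 1 ×ˢ Ioo (-1:ℝ) 1 := by
    rw [KK, interior_prod_eq, interior_Icc, interior_Icc]
  rw [h, closure_prod_eq, closure_Ioo (by norm_num : (0:ℝ) ≠ 1),
    closure_Ioo (by norm_num : (-1:ℝ) ≠ 1)]
  exact subset_rfl

lemma mem_KK {t x : ℝ} (ht : t ∈ Icc (0:ℝ) 1) (hx : x ∈ Icc (-1:ℝ) 1) :
    ((t, x) : ℝ × ℝ) ∈ KK := ⟨ht, hx⟩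

lemma Dv_contDiffOn {F : ℝ × ℝ → ℝ} {n m : WithTop ℕ∞} (h : ContDiffOn ℝ m F KK)
    (hm : n + 1 ≤ m) (vv : ℝ × ℝ) :
    ContDiffOn ℝ n (fun p => fderivWithin ℝ F KK p vv) KK :=
  (h.fderivWithin KK_uniqueDiff hm).clm_apply contDiffOn_const

/-- Lipschitz estimate from a bounded derivative on `[0,1]`. -/
lemma lip_est {F F' : ℝ → ℝ} {M : ℝ}
    (h : ∀ t ∈ Icc (0:ℝ) 1, HasDerivWithinAt F (F' t) (Icc (0:ℝ) 1) t)
    (hb : ∀ t ∈ Icc (0:ℝ) 1, |F' t| ≤ M) :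
    ∀ t ∈ Icc (0:ℝ) 1, |F t - F 0| ≤ M * t := by
  intro t ht
  have := norm_image_sub_le_of_norm_deriv_le_segment'
    (f := F) (f' := F') (a := 0) (b := 1) h (fun x hx => hb x ⟨hx.1, hx.2.le⟩) t ht
  simpa using this

/-- Second-order Taylor estimate on `[0,1]`. -/
lemma taylor2_est {F F' : ℝ → ℝ} {M : ℝ}
    (h : ∀ t ∈ Icc (0:ℝ) 1, HasDerivWithinAt F (F' t) (Icc (0:ℝ) 1) t)
    (hb : ∀ t ∈ Icc (0:ℝ) 1, |F' t - F' 0| ≤ M * t) :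
    ∀ t ∈ Icc (0:ℝ) 1, |F t - F 0 - t * F' 0| ≤ M * t ^ 2 := by
  intro t ht
  have hM : 0 ≤ M := by
    have := hb 1 (by norm_num)
    have h0 : (0:ℝ) ≤ |F' 1 - F' 0| := abs_nonneg _
    linarith [this]
  have key : ∀ x ∈ Icc (0:ℝ) t, HasDerivWithinAt (fun s => F s - s * F' 0)
      (F' x - F' 0) (Icc (0:ℝ) t) x := by
    intro x hx
    have hx1 : x ∈ Icc (0:ℝ) 1 := ⟨hx.1, hx.2.trans ht.2⟩
    have h1 : HasDerivWithinAt F (F' x) (Icc (0:ℝ) t) x :=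
      (h x hx1).mono (Icc_subset_Icc le_rfl ht.2)
    exact h1.sub (hasDerivAt_mul_const (F' 0)).hasDerivWithinAt
  have bound : ∀ x ∈ Ico (0:ℝ) t, ‖F' x - F' 0‖ ≤ M * t := by
    intro x hx
    have hx1 : x ∈ Icc (0:ℝ) 1 := ⟨hx.1, hx.2.le.trans ht.2⟩
    calc ‖F' x - F' 0‖ = |F' x - F' 0| := rfl
      _ ≤ M * x := hb x hx1
      _ ≤ M * t := by nlinarith [hx.1, hx.2.le]
  have := norm_image_sub_le_of_norm_deriv_le_segment' key bound t
    ⟨ht.1, le_rfl⟩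
  have h2 : ‖F t - t * F' 0 - (F 0 - 0 * F' 0)‖ ≤ M * t * (t - 0) := this
  calc |F t - F 0 - t * F' 0| = ‖F t - t * F' 0 - (F 0 - 0 * F' 0)‖ := by
        rw [Real.norm_eq_abs]; ring_nf
    _ ≤ M * t * (t - 0) := h2
    _ = M * t ^ 2 := by ring

/-- Third-order Taylor estimate on `[0,1]`. -/
lemma taylor3_est {F F' F'' : ℝ → ℝ} {M : ℝ}
    (h : ∀ t ∈ Icc (0:ℝ) 1, HasDerivWithinAt F (F' t) (Icc (0:ℝ) 1) t)
    (h' : ∀ t ∈ Icc (0:ℝ) 1, HasDerivWithinAt F' (F'' t) (Icc (0:ℝ) 1) t)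
    (hb : ∀ t ∈ Icc (0:ℝ) 1, |F'' t - F'' 0| ≤ M * t) :
    ∀ t ∈ Icc (0:ℝ) 1, |F t - F 0 - t * F' 0 - t ^ 2 / 2 * F'' 0| ≤ M * t ^ 3 := by
  intro t ht
  have hM : 0 ≤ M := by
    have := hb 1 (by norm_num)
    have h0 : (0:ℝ) ≤ |F'' 1 - F'' 0| := abs_nonneg _
    linarith
  have step1 : ∀ x ∈ Icc (0:ℝ) 1, |F' x - F' 0 - x * F'' 0| ≤ M * x ^ 2 :=
    taylor2_est h' hb
  have key : ∀ x ∈ Icc (0:ℝ) t, HasDerivWithinAt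
      (fun s => F s - s * F' 0 - s ^ 2 / 2 * F'' 0)
      (F' x - F' 0 - x * F'' 0) (Icc (0:ℝ) t) x := by
    intro x hx
    have hx1 : x ∈ Icc (0:ℝ) 1 := ⟨hx.1, hx.2.trans ht.2⟩
    have h1 : HasDerivWithinAt F (F' x) (Icc (0:ℝ) t) x :=
      (h x hx1).mono (Icc_subset_Icc le_rfl ht.2)
    have h2 : HasDerivAt (fun s : ℝ => s * F' 0) (F' 0) x := by
      simpa using (hasDerivAt_id x).mul_const (F' 0)
    have h3 : HasDerivAt (fun s : ℝ => s ^ 2 / 2 * F'' 0) (x * F'' 0) x := by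
      have : HasDerivAt (fun s : ℝ => s ^ 2 / 2) x x := by
        simpa using ((hasDerivAt_pow 2 x).div_const 2)
      simpa using this.mul_const (F'' 0)
    exact (h1.sub h2.hasDerivWithinAt).sub h3.hasDerivWithinAt
  have bound : ∀ x ∈ Ico (0:ℝ) t, ‖F' x - F' 0 - x * F'' 0‖ ≤ M * t ^ 2 := by
    intro x hx
    have hx1 : x ∈ Icc (0:ℝ) 1 := ⟨hx.1, hx.2.le.trans ht.2⟩
    calc ‖F' x - F' 0 - x * F'' 0‖ = |F' x - F' 0 - x * F'' 0| := rfl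
      _ ≤ M * x ^ 2 := step1 x hx1
      _ ≤ M * t ^ 2 := by
          have h1 : x ^ 2 ≤ t ^ 2 := by nlinarith [hx.1, hx.2.le]
          exact mul_le_mul_of_nonneg_left h1 hM
  have := norm_image_sub_le_of_norm_deriv_le_segment' key bound t ⟨ht.1, le_rfl⟩
  have h2 : ‖F t - t * F' 0 - t ^ 2 / 2 * F'' 0 -
      (F 0 - 0 * F' 0 - 0 ^ 2 / 2 * F'' 0)‖ ≤ M * t ^ 2 * (t - 0) := this
  calc |F t - F 0 - t * F' 0 - t ^ 2 / 2 * F'' 0|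
      = ‖F t - t * F' 0 - t ^ 2 / 2 * F'' 0 - (F 0 - 0 * F' 0 - 0 ^ 2 / 2 * F'' 0)‖ := by
        rw [Real.norm_eq_abs]; ring_nf
    _ ≤ M * t ^ 2 * (t - 0) := h2
    _ = M * t ^ 3 := by ring

/-- Spatial derivative of a slice. -/
lemma sliceX {V : Type*} [NormedAddCommGroup V] [NormedSpace ℝ V] {F : ℝ × ℝ → V}
    (hF : DifferentiableOn ℝ F KK) {t x : ℝ} (ht : t ∈ Icc (0:ℝ) 1)
    (hx : x ∈ Ioo (-1:ℝ) 1) :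
    HasDerivAt (fun y => F (t, y)) (fderivWithin ℝ F KK (t, x) exv) x := by
  have hι : HasDerivAt (fun y : ℝ => ((t, y) : ℝ × ℝ)) exv x :=
    (hasDerivAt_const x t).prodMk (hasDerivAt_id x)
  have hF' : HasFDerivWithinAt F (fderivWithin ℝ F KK (t, x)) KK (t, x) :=
    (hF _ (mem_KK ht ⟨hx.1.le, hx.2.le⟩)).hasFDerivWithinAt
  have hmaps : MapsTo (fun y : ℝ => ((t, y) : ℝ × ℝ)) (Ioo (-1:ℝ) 1) KK :=
    fun y hy => mem_KK ht ⟨hy.1.le, hy.2.le⟩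
  have := hF'.comp_hasDerivWithinAt x (hι.hasDerivWithinAt) hmaps
  have h2 := this.hasDerivAt (Ioo_mem_nhds hx.1 hx.2)
  exact h2

/-- Time derivative of a slice, within `[0,1]`. -/
lemma sliceT {V : Type*} [NormedAddCommGroup V] [NormedSpace ℝ V] {F : ℝ × ℝ → V}
    (hF : DifferentiableOn ℝ F KK) {t x : ℝ} (ht : t ∈ Icc (0:ℝ) 1)
    (hx : x ∈ Icc (-1:ℝ) 1) :
    HasDerivWithinAt (fun s => F (s, x)) (fderivWithin ℝ F KK (t, x) etv)
      (Icc (0:ℝ) 1) t := by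
  have hι : HasDerivWithinAt (fun s : ℝ => ((s, x) : ℝ × ℝ)) etv (Icc (0:ℝ) 1) t :=
    ((hasDerivAt_id t).prodMk (hasDerivAt_const t x)).hasDerivWithinAt
  have hF' : HasFDerivWithinAt F (fderivWithin ℝ F KK (t, x)) KK (t, x) :=
    (hF _ (mem_KK ht hx)).hasFDerivWithinAt
  have hmaps : MapsTo (fun s : ℝ => ((s, x) : ℝ × ℝ)) (Icc (0:ℝ) 1) KK :=
    fun s hs => mem_KK hs hx
  have := hF'.comp_hasDerivWithinAt t hι hmaps
  exact this

lemma eval_comm {G : ℝ × ℝ → (ℝ × ℝ →L[ℝ] ℝ)} {p : ℝ × ℝ}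
    (hG : DifferentiableWithinAt ℝ G KK p) (hp : p ∈ KK) (u z : ℝ × ℝ) :
    fderivWithin ℝ (fun q => G q u) KK p z = (fderivWithin ℝ G KK p z) u := by
  rw [fderivWithin_clm_apply (KK_uniqueDiff p hp) hG (differentiableWithinAt_const u)]
  rw [fderivWithin_const_apply u]
  simp

lemma deriv_slice {F : ℝ × ℝ → ℝ} (hF : DifferentiableOn ℝ F KK) {t : ℝ}
    (ht : t ∈ Icc (0:ℝ) 1) :
    deriv (fun x => F (t, x)) =ᶠ[nhds 0] fun x => Dx F (t, x) := by
  filter_upwards [Ioo_mem_nhds (by norm_num : (-1:ℝ) < 0) (by norm_num : (0:ℝ) < 1)]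
    with x hx
  exact (sliceX hF ht hx).deriv

lemma iteratedDeriv_slice_two {F : ℝ × ℝ → ℝ} (hF : DifferentiableOn ℝ F KK)
    (hF1 : DifferentiableOn ℝ (Dx F) KK) {t : ℝ} (ht : t ∈ Icc (0:ℝ) 1) :
    iteratedDeriv 2 (fun x => F (t, x)) 0 = Dx (Dx F) (t, 0) := by
  have d1 := deriv_slice hF ht
  have d2 := d1.deriv.trans (deriv_slice hF1 ht)
  rw [show (2:ℕ) = 1 + 1 from rfl, iteratedDeriv_succ, iteratedDeriv_one]
  exact d2.eq_of_nhds

lemma iteratedDeriv_slice_four {F : ℝ × ℝ → ℝ} (hF : DifferentiableOn ℝ F KK)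
    (hF1 : DifferentiableOn ℝ (Dx F) KK) (hF2 : DifferentiableOn ℝ (Dx (Dx F)) KK)
    (hF3 : DifferentiableOn ℝ (Dx (Dx (Dx F))) KK) {t : ℝ} (ht : t ∈ Icc (0:ℝ) 1) :
    iteratedDeriv 4 (fun x => F (t, x)) 0 = Dx (Dx (Dx (Dx F))) (t, 0) := by
  have d1 := deriv_slice hF ht
  have d2 := d1.deriv.trans (deriv_slice hF1 ht)
  have d3 := d2.deriv.trans (deriv_slice hF2 ht)
  have d4 := d3.deriv.trans (deriv_slice hF3 ht)
  rw [show (4:ℕ) = 1 + 1 + 1 + 1 from rfl, iteratedDeriv_succ, iteratedDeriv_succ,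
    iteratedDeriv_succ, iteratedDeriv_one]
  exact d4.eq_of_nhds

lemma evIter {h₁ h₂ : ℝ → ℝ} {x : ℝ} (h : h₁ =ᶠ[nhds x] h₂) (n : ℕ) :
    iteratedDeriv n h₁ =ᶠ[nhds x] iteratedDeriv n h₂ := by
  induction n with
  | zero => simpa [iteratedDeriv_zero] using h
  | succ n ih => rw [iteratedDeriv_succ, iteratedDeriv_succ]; exact ih.deriv

end TDBC

open TDBC Set

/-- Third-order accuracy of the TDBC boundary data: the Taylor-expansion boundary
values `V(s)|₀ = w(τ/2,0) + s ∂ₓₓw(τ/2,·)(0) + (s²/2) ∂ₓ⁴w(τ/2,·)(0)` agree with the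
corrected data `V̄(s) = b + (τ/2) f(b) + (τ²/8) f'(b) f(b) − s f(b) + (s(τ−s)/2) d`,
where `d = (f∘u₀)''(0)`, up to `O(τ³)`, uniformly for `0 ≤ s ≤ τ`. -/
theorem tdbc_boundary_data_order3
    (f : ℝ → ℝ) (hf : ContDiff ℝ 2 f) (b : ℝ) (u₀ : ℝ → ℝ)
    (hu₀0 : u₀ 0 = b) (hu₀2 : iteratedDeriv 2 u₀ 0 = -f b)
    (hu₀4 : iteratedDeriv 4 u₀ 0 = -(iteratedDeriv 2 (fun x : ℝ => f (u₀ x)) 0))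
    (w : ℝ × ℝ → ℝ)
    (hw : ContDiffOn ℝ 6 w (Set.Icc (0 : ℝ) 1 ×ˢ Set.Icc (-1 : ℝ) 1))
    (hw0 : ∀ x ∈ Set.Icc (-1 : ℝ) 1, w (0, x) = u₀ x)
    (hwt : ∀ p ∈ Set.Icc (0 : ℝ) 1 ×ˢ Set.Icc (-1 : ℝ) 1,
      HasDerivAt (fun s : ℝ => w (s, p.2)) (f (w p)) p.1) :
    ∃ C : ℝ, 0 < C ∧ ∀ τ ∈ Set.Ioc (0 : ℝ) 1, ∀ s ∈ Set.Icc (0 : ℝ) τ,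
      |w (τ / 2, 0) + s * iteratedDeriv 2 (fun x : ℝ => w (τ / 2, x)) 0
          + (s ^ 2 / 2) * iteratedDeriv 4 (fun x : ℝ => w (τ / 2, x)) 0
          - (b + (τ / 2) * f b + (τ ^ 2 / 8) * deriv f b * f b - s * f b
              + (s * (τ - s) / 2) * iteratedDeriv 2 (fun x : ℝ => f (u₀ x)) 0)|
        ≤ C * τ ^ 3 := by
  have hK := KK_uniqueDiff
  have hw6 : ContDiffOn ℝ 6 w KK := hw
  have h0x : (0:ℝ) ∈ Icc (-1:ℝ) 1 := by norm_num
  have h0t : (0:ℝ) ∈ Icc (0:ℝ) 1 := by norm_num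
  -- smoothness chain
  have h5 : ContDiffOn ℝ 5 (Dx w) KK := Dv_contDiffOn hw6 (by norm_num) exv
  have h4 : ContDiffOn ℝ 4 (Dx (Dx w)) KK := Dv_contDiffOn h5 (by norm_num) exv
  have h3 : ContDiffOn ℝ 3 (Dx (Dx (Dx w))) KK := Dv_contDiffOn h4 (by norm_num) exv
  have h2 : ContDiffOn ℝ 2 (Dx (Dx (Dx (Dx w)))) KK := Dv_contDiffOn h3 (by norm_num) exv
  have dw : DifferentiableOn ℝ w KK := hw6.differentiableOn (by norm_num)
  have d1 : DifferentiableOn ℝ (Dx w) KK := h5.differentiableOn (by norm_num)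
  have d2 : DifferentiableOn ℝ (Dx (Dx w)) KK := h4.differentiableOn (by norm_num)
  have d3 : DifferentiableOn ℝ (Dx (Dx (Dx w))) KK := h3.differentiableOn (by norm_num)
  have d4 : DifferentiableOn ℝ (Dx (Dx (Dx (Dx w)))) KK := h2.differentiableOn (by norm_num)
  -- v = f ∘ w
  set v : ℝ × ℝ → ℝ := fun q => f (w q) with hv_def
  have hv2 : ContDiffOn ℝ 2 v KK := hf.comp_contDiffOn (hw6.of_le (by norm_num))
  have hv1 : ContDiffOn ℝ 1 (Dx v) KK := Dv_contDiffOn hv2 (by norm_num) exv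
  have dv : DifferentiableOn ℝ v KK := hv2.differentiableOn (by norm_num)
  have dv1 : DifferentiableOn ℝ (Dx v) KK := hv1.differentiableOn (by norm_num)
  -- the PDE within KK
  have hPDE : ∀ p ∈ KK, fderivWithin ℝ w KK p etv = v p := by
    intro p hp
    obtain ⟨t, x⟩ := p
    have h1 := sliceT dw hp.1 hp.2
    have h2 : HasDerivWithinAt (fun s => w (s, x)) (f (w (t, x))) (Icc (0:ℝ) 1) t := by
      simpa using (hwt (t, x) hp).hasDerivWithinAt
    have hu : UniqueDiffWithinAt ℝ (Icc (0:ℝ) 1) t := uniqueDiffOn_Icc zero_lt_one t hp.1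
    have := (h1.derivWithin hu).symm.trans (h2.derivWithin hu)
    simpa [hv_def] using this
  -- symmetry of second derivatives within KK
  have hsymm : ∀ (F : ℝ × ℝ → ℝ), ContDiffOn ℝ 2 F KK → ∀ p ∈ KK,
      fderivWithin ℝ (fderivWithin ℝ F KK) KK p etv exv
        = fderivWithin ℝ (fderivWithin ℝ F KK) KK p exv etv := by
    intro F hF p hp
    exact (hF.contDiffWithinAt hp).isSymmSndFDerivWithinAt (by simp) hK
      (KK_closure_interior hp) hp etv exv
  -- key identity: ∂ₜ ∂ₓₓ w = ∂ₓₓ (f ∘ w) within KK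
  have hW1d : DifferentiableOn ℝ (fderivWithin ℝ w KK) KK :=
    (hw6.fderivWithin hK (by norm_num)).differentiableOn
      (by norm_num : (5 : WithTop ℕ∞) ≠ 0)
  have hW1'd : DifferentiableOn ℝ (fderivWithin ℝ (Dx w) KK) KK :=
    (h5.fderivWithin hK (by norm_num)).differentiableOn
      (by norm_num : (4 : WithTop ℕ∞) ≠ 0)
  have e2 : ∀ q ∈ KK, fderivWithin ℝ (Dx w) KK q etv = Dx v q := by
    intro q hq
    have s1 : fderivWithin ℝ (Dx w) KK q etv
        = (fderivWithin ℝ (fderivWithin ℝ w KK) KK q etv) exv :=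
      eval_comm (hW1d q hq) hq exv etv
    have s2 := hsymm w (hw6.of_le (by norm_num)) q hq
    have s3 : (fderivWithin ℝ (fderivWithin ℝ w KK) KK q exv) etv
        = fderivWithin ℝ (fun r => fderivWithin ℝ w KK r etv) KK q exv :=
      (eval_comm (hW1d q hq) hq etv exv).symm
    have s4 : fderivWithin ℝ (fun r => fderivWithin ℝ w KK r etv) KK q exv
        = fderivWithin ℝ v KK q exv := by
      rw [fderivWithin_congr hPDE (hPDE q hq)]
    rw [s1, s2, s3, s4]
    rfl
  have claimS : ∀ p ∈ KK, fderivWithin ℝ (Dx (Dx w)) KK p etv = Dx (Dx v) p := by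
    intro p hp
    have s1 : fderivWithin ℝ (Dx (Dx w)) KK p etv
        = (fderivWithin ℝ (fderivWithin ℝ (Dx w) KK) KK p etv) exv :=
      eval_comm (hW1'd p hp) hp exv etv
    have s2 := hsymm (Dx w) (h5.of_le (by norm_num)) p hp
    have s3 : (fderivWithin ℝ (fderivWithin ℝ (Dx w) KK) KK p exv) etv
        = fderivWithin ℝ (fun q => fderivWithin ℝ (Dx w) KK q etv) KK p exv :=
      (eval_comm (hW1'd p hp) hp etv exv).symm
    have s4 : fderivWithin ℝ (fun q => fderivWithin ℝ (Dx w) KK q etv) KK p exv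
        = fderivWithin ℝ (Dx v) KK p exv := by
      rw [fderivWithin_congr e2 (e2 p hp)]
    rw [s1, s2, s3, s4]
    rfl
  -- boundary identifications
  have hueq : (fun x => w (0, x)) =ᶠ[nhds (0:ℝ)] u₀ := by
    filter_upwards [Icc_mem_nhds (by norm_num : (-1:ℝ) < 0) (by norm_num : (0:ℝ) < 1)]
      with x hx
    exact hw0 x hx
  have a20 : Dx (Dx w) (0, 0) = -f b := by
    rw [← iteratedDeriv_slice_two dw d1 h0t, (evIter hueq 2).eq_of_nhds]
    exact hu₀2
  have a40 : Dx (Dx (Dx (Dx w))) (0, 0) = -(iteratedDeriv 2 (fun x : ℝ => f (u₀ x)) 0) := by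
    rw [← iteratedDeriv_slice_four dw d1 d2 d3 h0t, (evIter hueq 4).eq_of_nhds]
    exact hu₀4
  have hveq : (fun x => v (0, x)) =ᶠ[nhds (0:ℝ)] (fun x : ℝ => f (u₀ x)) := by
    filter_upwards [hueq] with x hx
    simp only [hv_def]
    rw [hx]
  have c0 : fderivWithin ℝ (Dx (Dx w)) KK (0, 0) etv
      = iteratedDeriv 2 (fun x : ℝ => f (u₀ x)) 0 := by
    rw [claimS (0, 0) (mem_KK h0t h0x), ← iteratedDeriv_slice_two dv dv1 h0t,
      (evIter hveq 2).eq_of_nhds]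
  -- order-4 estimate
  have hcont4 : ContinuousOn (fun q => fderivWithin ℝ (Dx (Dx (Dx (Dx w)))) KK q etv) KK :=
    (Dv_contDiffOn h2 (by norm_num : (1:WithTop ℕ∞) + 1 ≤ 2) etv).continuousOn
  obtain ⟨M4, hM4⟩ := KK_compact.exists_bound_of_continuousOn hcont4
  have est4 : ∀ t ∈ Icc (0:ℝ) 1,
      |Dx (Dx (Dx (Dx w))) (t, 0) - Dx (Dx (Dx (Dx w))) (0, 0)| ≤ M4 * t :=
    lip_est (fun t ht => sliceT d4 ht h0x) (fun t ht => hM4 _ (mem_KK ht h0x))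
  have hM4nn : 0 ≤ M4 := le_trans (norm_nonneg _) (hM4 (0, 0) (mem_KK h0t h0x))
  -- order-2 estimate
  have hGdiff : DifferentiableOn ℝ (fun q => fderivWithin ℝ (Dx (Dx w)) KK q etv) KK :=
    (Dv_contDiffOn h4 (by norm_num : (3:WithTop ℕ∞) + 1 ≤ 4) etv).differentiableOn
      (by norm_num)
  have hcontc : ContinuousOn (fun q => fderivWithin ℝ
      (fun q' => fderivWithin ℝ (Dx (Dx w)) KK q' etv) KK q etv) KK :=
    (Dv_contDiffOn (Dv_contDiffOn h4 (by norm_num : (3:WithTop ℕ∞) + 1 ≤ 4) etv)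
      (by norm_num : (1:WithTop ℕ∞) + 1 ≤ 3) etv).continuousOn
  obtain ⟨Mc, hMc⟩ := KK_compact.exists_bound_of_continuousOn hcontc
  have estc : ∀ t ∈ Icc (0:ℝ) 1,
      |fderivWithin ℝ (Dx (Dx w)) KK (t, 0) etv
        - fderivWithin ℝ (Dx (Dx w)) KK (0, 0) etv| ≤ Mc * t :=
    lip_est (fun t ht => sliceT hGdiff ht h0x) (fun t ht => hMc _ (mem_KK ht h0x))
  have hMcnn : 0 ≤ Mc := le_trans (norm_nonneg _) (hMc (0, 0) (mem_KK h0t h0x))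
  have est2 : ∀ t ∈ Icc (0:ℝ) 1,
      |Dx (Dx w) (t, 0) - Dx (Dx w) (0, 0)
        - t * fderivWithin ℝ (Dx (Dx w)) KK (0, 0) etv| ≤ Mc * t ^ 2 :=
    taylor2_est (fun t ht => sliceT d2 ht h0x) estc
  -- the ODE estimate
  set g : ℝ → ℝ := fun t => w (t, 0) with hg_def
  have hgt : ∀ t ∈ Icc (0:ℝ) 1, HasDerivAt g (f (g t)) t := by
    intro t ht
    have := hwt (t, 0) (mem_KK ht h0x)
    simpa [hg_def] using this
  have hfd : Differentiable ℝ f := hf.differentiable (by norm_num)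
  have hf1 : ContDiff ℝ 1 (deriv f) := by
    have h21 : (2 : WithTop ℕ∞) = 1 + 1 := by norm_num
    rw [h21] at hf
    exact (contDiff_succ_iff_deriv.mp hf).2.2
  have hfd' : Differentiable ℝ (deriv f) := hf1.differentiable (by norm_num)
  have hg1t : ∀ t ∈ Icc (0:ℝ) 1,
      HasDerivAt (fun t => f (g t)) (deriv f (g t) * f (g t)) t := by
    intro t ht
    exact ((hfd (g t)).hasDerivAt.comp t (hgt t ht))
  have hg2t : ∀ t ∈ Icc (0:ℝ) 1, HasDerivAt (fun t => deriv f (g t) * f (g t))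
      (deriv (deriv f) (g t) * f (g t) * f (g t)
        + deriv f (g t) * (deriv f (g t) * f (g t))) t := by
    intro t ht
    have ha : HasDerivAt (fun t => deriv f (g t)) (deriv (deriv f) (g t) * f (g t)) t := by
      exact ((hfd' (g t)).hasDerivAt.comp t (hgt t ht))
    exact ha.mul (hg1t t ht)
  have hgc : ContinuousOn g (Icc (0:ℝ) 1) :=
    fun t ht => ((hgt t ht).continuousAt).continuousWithinAt
  have hcf : Continuous f := hf.continuous
  have hcdf : Continuous (deriv f) := hf1.continuous
  have hcddf : Continuous (deriv (deriv f)) := hf1.continuous_deriv le_rfl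
  have hg3c : ContinuousOn (fun t => deriv (deriv f) (g t) * f (g t) * f (g t)
      + deriv f (g t) * (deriv f (g t) * f (g t))) (Icc (0:ℝ) 1) := by
    apply ContinuousOn.add
    · exact ((hcddf.comp_continuousOn hgc).mul (hcf.comp_continuousOn hgc)).mul
        (hcf.comp_continuousOn hgc)
    · exact (hcdf.comp_continuousOn hgc).mul
        ((hcdf.comp_continuousOn hgc).mul (hcf.comp_continuousOn hgc))
  obtain ⟨M3, hM3⟩ := isCompact_Icc.exists_bound_of_continuousOn hg3c
  have est_g2 : ∀ t ∈ Icc (0:ℝ) 1, |deriv f (g t) * f (g t) - deriv f (g 0) * f (g 0)|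
      ≤ M3 * t :=
    lip_est (fun t ht => (hg2t t ht).hasDerivWithinAt) (fun t ht => hM3 t ht)
  have est0 : ∀ t ∈ Icc (0:ℝ) 1, |g t - g 0 - t * f (g 0)
      - t ^ 2 / 2 * (deriv f (g 0) * f (g 0))| ≤ M3 * t ^ 3 :=
    taylor3_est (fun t ht => (hgt t ht).hasDerivWithinAt)
      (fun t ht => (hg1t t ht).hasDerivWithinAt) est_g2
  have hg0 : g 0 = b := by
    rw [hg_def]
    simpa using (hw0 0 h0x).trans hu₀0
  have hM3nn : 0 ≤ M3 := le_trans (norm_nonneg _) (hM3 0 h0t)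
  -- conclusion
  refine ⟨M3 / 8 + Mc / 4 + M4 / 4 + 1, by positivity, ?_⟩
  intro τ hτ s hs
  have ht2 : τ / 2 ∈ Icc (0:ℝ) 1 := ⟨by linarith [hτ.1.le], by linarith [hτ.2]⟩
  rw [iteratedDeriv_slice_two dw d1 ht2, iteratedDeriv_slice_four dw d1 d2 d3 ht2]
  have E0 : |w (τ / 2, 0) - b - (τ / 2) * f b
      - (τ / 2) ^ 2 / 2 * (deriv f b * f b)| ≤ M3 * (τ / 2) ^ 3 := by
    have := est0 (τ / 2) ht2
    rw [hg0] at this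
    simpa [hg_def] using this
  have E1 := est2 (τ / 2) ht2
  rw [a20, c0] at E1
  have E2 := est4 (τ / 2) ht2
  rw [a40] at E2
  set A := Dx (Dx w) (τ / 2, 0) with hA_def
  set B := Dx (Dx (Dx (Dx w))) (τ / 2, 0) with hB_def
  set dd := iteratedDeriv 2 (fun x : ℝ => f (u₀ x)) 0 with hdd_def
  have hsplit : w (τ / 2, 0) + s * A + s ^ 2 / 2 * B
      - (b + τ / 2 * f b + τ ^ 2 / 8 * deriv f b * f b - s * f b + s * (τ - s) / 2 * dd)
      = (w (τ / 2, 0) - b - (τ / 2) * f b - (τ / 2) ^ 2 / 2 * (deriv f b * f b))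
        + s * (A - -f b - τ / 2 * dd) + (s ^ 2 / 2) * (B - -dd) := by ring
  rw [hsplit]
  have tri : |(w (τ / 2, 0) - b - (τ / 2) * f b - (τ / 2) ^ 2 / 2 * (deriv f b * f b))
      + s * (A - -f b - τ / 2 * dd) + (s ^ 2 / 2) * (B - -dd)|
      ≤ |w (τ / 2, 0) - b - (τ / 2) * f b - (τ / 2) ^ 2 / 2 * (deriv f b * f b)|
        + |s * (A - -f b - τ / 2 * dd)| + |(s ^ 2 / 2) * (B - -dd)| :=
    (abs_add_le _ _).trans (add_le_add_left (abs_add_le _ _) _)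
  have habs1 : |s * (A - -f b - τ / 2 * dd)| = s * |A - -f b - τ / 2 * dd| := by
    rw [abs_mul, abs_of_nonneg hs.1]
  have habs2 : |(s ^ 2 / 2) * (B - -dd)| = s ^ 2 / 2 * |B - -dd| := by
    rw [abs_mul, abs_of_nonneg (by positivity : (0:ℝ) ≤ s ^ 2 / 2)]
  have hb1 : s * |A - -f b - τ / 2 * dd| ≤ s * (Mc * (τ / 2) ^ 2) :=
    mul_le_mul_of_nonneg_left E1 hs.1
  have hb2 : s ^ 2 / 2 * |B - -dd| ≤ s ^ 2 / 2 * (M4 * (τ / 2)) :=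
    mul_le_mul_of_nonneg_left E2 (by positivity)
  have final : M3 * (τ / 2) ^ 3 + s * (Mc * (τ / 2) ^ 2) + s ^ 2 / 2 * (M4 * (τ / 2))
      ≤ (M3 / 8 + Mc / 4 + M4 / 4 + 1) * τ ^ 3 := by
    have hs2 : s ^ 2 ≤ τ ^ 2 := by
      have := mul_le_mul hs.2 hs.2 hs.1 (hs.1.trans hs.2)
      calc s ^ 2 = s * s := sq s
        _ ≤ τ * τ := this
        _ = τ ^ 2 := (sq τ).symm
    have q1 : s * (Mc * (τ / 2) ^ 2) ≤ Mc / 4 * τ ^ 3 := by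
      have h := mul_le_mul_of_nonneg_right hs.2 (mul_nonneg hMcnn (sq_nonneg τ))
      calc s * (Mc * (τ / 2) ^ 2) = s * (Mc * τ ^ 2) / 4 := by ring
        _ ≤ τ * (Mc * τ ^ 2) / 4 := by linarith
        _ = Mc / 4 * τ ^ 3 := by ring
    have q2 : s ^ 2 / 2 * (M4 * (τ / 2)) ≤ M4 / 4 * τ ^ 3 := by
      have h := mul_le_mul_of_nonneg_right hs2 (mul_nonneg hM4nn hτ.1.le)
      calc s ^ 2 / 2 * (M4 * (τ / 2)) = s ^ 2 * (M4 * τ) / 4 := by ring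
        _ ≤ τ ^ 2 * (M4 * τ) / 4 := by linarith
        _ = M4 / 4 * τ ^ 3 := by ring
    have q3 : (0:ℝ) ≤ τ ^ 3 := pow_nonneg hτ.1.le 3
    have e : M3 * (τ / 2) ^ 3 = M3 / 8 * τ ^ 3 := by ring
    linarith [q1, q2, q3]
  calc |(w (τ / 2, 0) - b - (τ / 2) * f b - (τ / 2) ^ 2 / 2 * (deriv f b * f b))
      + s * (A - -f b - τ / 2 * dd) + (s ^ 2 / 2) * (B - -dd)|
      ≤ |w (τ / 2, 0) - b - (τ / 2) * f b - (τ / 2) ^ 2 / 2 * (deriv f b * f b)|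
        + |s * (A - -f b - τ / 2 * dd)| + |(s ^ 2 / 2) * (B - -dd)| := tri
    _ ≤ M3 * (τ / 2) ^ 3 + s * (Mc * (τ / 2) ^ 2) + s ^ 2 / 2 * (M4 * (τ / 2)) := by
        rw [habs1, habs2]
        exact add_le_add (add_le_add E0 hb1) hb2
    _ ≤ (M3 / 8 + Mc / 4 + M4 / 4 + 1) * τ ^ 3 := final
end
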